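/- Define S̃₀^ε = {ρ_{RMM'} : ∃ channel N_{M→Q} with P(N(tr_{M'} ρ), Ψ⁺_{RQ}) ≤ ε} and S̃₁^ε analogously with M and M' exchanged, where P is the purified distance and Ψ⁺ the maximally entangled two-qubit state. If ε < √3/4, then S̃₀^ε ∩ S̃₁^ε = ∅. -/

import Mathlib

open Matrix
open scoped Classical ComplexOrder

noncomputable def binEnt (x : ℝ) : ℝ := -x * Real.logb 2 x - (1 - x) * Real.logb 2 (1 - x)

/-- von Neumann entropy (base 2) of a matrix, via eigenvalues (0 if not Hermitian). -/
noncomputable def vnEnt {d : Type*} [Fintype d] [DecidableEq d] (ρ : Matrix d d ℂ) : ℝ :=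
  if h : ρ.IsHermitian then ∑ i, -(h.eigenvalues i) * Real.logb 2 (h.eigenvalues i) else 0

/-- Trace norm of a Hermitian matrix (0 if not Hermitian). -/
noncomputable def traceNorm {d : Type*} [Fintype d] [DecidableEq d] (A : Matrix d d ℂ) : ℝ :=
  if h : A.IsHermitian then ∑ i, |h.eigenvalues i| else 0

noncomputable def fidelity {d : Type*} [Fintype d] [DecidableEq d] (ρ σ : Matrix d d ℂ) : ℝ :=
  if hσ : σ.PosSemidef then
    if h : (((hσ.1.eigenvectorUnitary : Matrix d d ℂ) *
        diagonal (fun i => ((Real.sqrt (hσ.1.eigenvalues i) : ℝ) : ℂ)) *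
        (star (hσ.1.eigenvectorUnitary : Matrix d d ℂ))) * ρ *
        ((hσ.1.eigenvectorUnitary : Matrix d d ℂ) *
        diagonal (fun i => ((Real.sqrt (hσ.1.eigenvalues i) : ℝ) : ℂ)) *
        (star (hσ.1.eigenvectorUnitary : Matrix d d ℂ)))).IsHermitian then
      ∑ i, Real.sqrt (h.eigenvalues i) else 0
  else 0

noncomputable def pdist {d : Type*} [Fintype d] [DecidableEq d] (ρ σ : Matrix d d ℂ) : ℝ :=
  Real.sqrt (1 - (fidelity ρ σ) ^ 2)

def IsState {d : Type*} [Fintype d] [DecidableEq d] (ρ : Matrix d d ℂ) : Prop :=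
  ρ.PosSemidef ∧ ρ.trace = 1

/-- partial trace over the second tensor factor -/
noncomputable def ptraceR {a b : Type*} [Fintype b] (ρ : Matrix (a × b) (a × b) ℂ) : Matrix a a ℂ :=
  fun i j => ∑ k, ρ (i, k) (j, k)

/-- partial trace over the first tensor factor -/
noncomputable def ptraceL {a b : Type*} [Fintype a] (ρ : Matrix (a × b) (a × b) ℂ) : Matrix b b ℂ :=
  fun i j => ∑ k, ρ (k, i) (k, j)

/-- conditional von Neumann entropy H(A|B) of a state on A × B -/
noncomputable def condEnt {a b : Type*} [Fintype a] [Fintype b] [DecidableEq a] [DecidableEq b]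
    (ρ : Matrix (a × b) (a × b) ℂ) : ℝ := vnEnt ρ - vnEnt (ptraceL ρ)

/-- computational-basis projector on a qubit -/
noncomputable def Pc (b : Fin 2) : Matrix (Fin 2) (Fin 2) ℂ := fun i j => if i = b ∧ j = b then 1 else 0

/-- Hadamard-basis projector on a qubit -/
noncomputable def Ph (b : Fin 2) : Matrix (Fin 2) (Fin 2) ℂ :=
  fun i j => (1 / 2 : ℂ) * (-1) ^ ((i : ℕ) * (b : ℕ)) * (-1) ^ ((b : ℕ) * (j : ℕ))

/-- measure the first (qubit) factor with rank-one projectors `P`, storing the outcome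
classically in its place -/
noncomputable def cqMeasure {m : Type*} [Fintype m] (P : Fin 2 → Matrix (Fin 2) (Fin 2) ℂ)
    (ρ : Matrix (Fin 2 × m) (Fin 2 × m) ℂ) : Matrix (Fin 2 × m) (Fin 2 × m) ℂ :=
  fun zi z'j => if zi.1 = z'j.1 then ∑ r, ∑ t, (P zi.1) r t * ρ (t, zi.2) (r, z'j.2) else 0

/-- outer product |ψ⟩⟨ψ| of a vector -/
noncomputable def outer {d : Type*} (ψ : d → ℂ) : Matrix d d ℂ := fun i j => ψ i * (starRingEnd ℂ) (ψ j)

/-- the maximally entangled state `|Φ⁺⟩ = (|00⟩+|11⟩)/√2` of two qubits, as a density matrix. -/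
noncomputable def PhiRQ : Matrix (Fin 2 × Fin 2) (Fin 2 × Fin 2) ℂ :=
  outer (fun p => if p.1 = p.2 then ((Real.sqrt 2 : ℝ) : ℂ)⁻¹ else 0)

/-- trace out the third subsystem of a state on `R ⊗ M ⊗ M'` -/
noncomputable def trThird {dM dM' : ℕ} (ρ : Matrix (Fin 2 × Fin dM × Fin dM') (Fin 2 × Fin dM × Fin dM') ℂ) :
    Matrix (Fin 2 × Fin dM) (Fin 2 × Fin dM) ℂ :=
  fun p q => ∑ k, ρ (p.1, p.2, k) (q.1, q.2, k)

/-- trace out the second subsystem of a state on `R ⊗ M ⊗ M'` -/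
noncomputable def trSecond {dM dM' : ℕ} (ρ : Matrix (Fin 2 × Fin dM × Fin dM') (Fin 2 × Fin dM × Fin dM') ℂ) :
    Matrix (Fin 2 × Fin dM') (Fin 2 × Fin dM') ℂ :=
  fun p q => ∑ e, ρ (p.1, e, p.2) (q.1, e, q.2)

/-- apply a channel, given by Kraus operators `K i : M → Q`, to the second factor of a
state on `R ⊗ M`. -/
noncomputable def applyKraus {dM k : ℕ} (K : Fin k → Matrix (Fin 2) (Fin dM) ℂ)
    (τ : Matrix (Fin 2 × Fin dM) (Fin 2 × Fin dM) ℂ) :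
    Matrix (Fin 2 × Fin 2) (Fin 2 × Fin 2) ℂ :=
  fun p p' => ∑ i, ∑ m, ∑ m', K i p.2 m * τ (p.1, m) (p'.1, m') * (starRingEnd ℂ) (K i p'.2 m')

/-- `S̃₀^ε`: states on `R ⊗ M ⊗ M'` from which the maximally entangled state between `R`
and a qubit can be recovered, up to purified distance `ε`, by a channel acting on `M` alone. -/
def recovSet0 {dM dM' : ℕ} (ε : ℝ) : Set (Matrix (Fin 2 × Fin dM × Fin dM') (Fin 2 × Fin dM × Fin dM') ℂ) :=
  {ρ | IsState ρ ∧ ∃ (k : ℕ) (K : Fin k → Matrix (Fin 2) (Fin dM) ℂ),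
    (∑ i, (K i)ᴴ * K i = 1) ∧ pdist (applyKraus K (trThird ρ)) PhiRQ ≤ ε}

/-- `S̃₁^ε`: same with recovery acting on `M'` alone. -/
def recovSet1 {dM dM' : ℕ} (ε : ℝ) : Set (Matrix (Fin 2 × Fin dM × Fin dM') (Fin 2 × Fin dM × Fin dM') ℂ) :=
  {ρ | IsState ρ ∧ ∃ (k : ℕ) (K : Fin k → Matrix (Fin 2) (Fin dM') ℂ),
    (∑ i, (K i)ᴴ * K i = 1) ∧ pdist (applyKraus K (trSecond ρ)) PhiRQ ≤ ε}


/-! ### Auxiliary material -/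

noncomputable def psiv : Fin 2 × Fin 2 → ℂ := fun p => if p.1 = p.2 then ((Real.sqrt 2 : ℝ) : ℂ)⁻¹ else 0

lemma PhiRQ_eq : PhiRQ = outer psiv := rfl

lemma conj_s : (starRingEnd ℂ) (((Real.sqrt 2 : ℝ) : ℂ)⁻¹) = ((Real.sqrt 2 : ℝ) : ℂ)⁻¹ := by
  rw [map_inv₀, Complex.conj_ofReal]

lemma s_mul_s : (((Real.sqrt 2 : ℝ) : ℂ)⁻¹) * (((Real.sqrt 2 : ℝ) : ℂ)⁻¹) = 1/2 := by
  rw [← mul_inv, ← Complex.ofReal_mul, Real.mul_self_sqrt (by norm_num)]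
  norm_num

lemma conj_psiv (p : Fin 2 × Fin 2) : (starRingEnd ℂ) (psiv p) = psiv p := by
  unfold psiv; split <;> simp [conj_s]

lemma psiv_norm : ∑ k, (starRingEnd ℂ) (psiv k) * psiv k = 1 := by
  simp only [conj_psiv]
  rw [Fintype.sum_prod_type]
  simp [psiv, Fin.sum_univ_two, s_mul_s]

lemma outer_psd {d : Type*} [Fintype d] [DecidableEq d] (ψ : d → ℂ) : (outer ψ).PosSemidef := by
  refine Matrix.PosSemidef.of_dotProduct_mulVec_nonneg ?_ ?_
  · ext i j
    simp [outer, conjTranspose_apply, mul_comm]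
  · intro x
    set z := ∑ j, (starRingEnd ℂ) (ψ j) * x j with hz
    have : dotProduct (star x) (outer ψ *ᵥ x) = star z * z := by
      calc dotProduct (star x) (outer ψ *ᵥ x)
          = ∑ i, (star (x i) * ψ i) * z := by
            simp only [dotProduct, mulVec, outer, Pi.star_apply, dotProduct]
            refine Finset.sum_congr rfl fun i _ => ?_
            rw [hz, Finset.mul_sum, Finset.mul_sum]
            exact Finset.sum_congr rfl fun j _ => by ring
        _ = (∑ i, star (x i) * ψ i) * z := by rw [Finset.sum_mul]
        _ = star z * z := by
            congr 1
            rw [hz, star_sum]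
            refine Finset.sum_congr rfl fun j _ => ?_
            rw [star_mul']
            simp [RCLike.star_def, mul_comm]
    rw [this]
    exact star_mul_self_nonneg z

lemma PhiRQ_psd : PhiRQ.PosSemidef := outer_psd _

lemma outer_mul_outer_self : outer psiv * outer psiv = outer psiv := by
  ext i j
  simp only [Matrix.mul_apply, outer]
  calc ∑ k, psiv i * (starRingEnd ℂ) (psiv k) * (psiv k * (starRingEnd ℂ) (psiv j))
      = (∑ k, (starRingEnd ℂ) (psiv k) * psiv k) * (psiv i * (starRingEnd ℂ) (psiv j)) := by
        rw [Finset.sum_mul]; exact Finset.sum_congr rfl fun k _ => by ring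
    _ = psiv i * (starRingEnd ℂ) (psiv j) := by rw [psiv_norm, one_mul]

lemma trace_eq_sum_eig {n : Type*} [Fintype n] [DecidableEq n] {A : Matrix n n ℂ}
    (hA : A.IsHermitian) : A.trace = ∑ i, (hA.eigenvalues i : ℂ) := by
  exact hA.trace_eq_sum_eigenvalues

lemma eig_quad {n : Type*} [Fintype n] [DecidableEq n] {A : Matrix n n ℂ}
    (hA : A.IsHermitian) (c : ℝ) (hsq : A * A = (c : ℂ) • A) (i : n) :
    hA.eigenvalues i = 0 ∨ hA.eigenvalues i = c := by
  have hv := hA.mulVec_eigenvectorBasis i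
  set lam := hA.eigenvalues i with hlam
  set v : n → ℂ := ⇑(hA.eigenvectorBasis i) with hvdef
  obtain ⟨x, hx⟩ : ∃ x, v x ≠ 0 := by
    by_contra h
    push_neg at h
    have h1 : ‖hA.eigenvectorBasis i‖ = 1 := hA.eigenvectorBasis.orthonormal.1 i
    have h0 : ‖hA.eigenvectorBasis i‖ = 0 := by
      rw [EuclideanSpace.norm_eq]
      simp [show ∀ x, (hA.eigenvectorBasis i) x = 0 from h]
    rw [h0] at h1; norm_num at h1
  have hv1 : A *ᵥ v = fun y => (lam : ℂ) * v y := by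
    rw [hv]; funext y; simp [Complex.real_smul]
  have h2 : (A * A) *ᵥ v = fun y => ((lam : ℂ) * (lam : ℂ)) * v y := by
    rw [← Matrix.mulVec_mulVec, hv1]
    funext y
    simp only [Matrix.mulVec, dotProduct]
    calc ∑ j, A y j * ((lam:ℂ) * v j) = (lam:ℂ) * ∑ j, A y j * v j := by
          rw [Finset.mul_sum]; exact Finset.sum_congr rfl fun j _ => by ring
      _ = (lam:ℂ) * ((lam:ℂ) * v y) := by
          rw [show (∑ j, A y j * v j) = (A *ᵥ v) y from rfl, hv1]
      _ = ((lam:ℂ) * (lam:ℂ)) * v y := by ring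
  have h3 : (A * A) *ᵥ v = fun y => ((c:ℂ) * (lam:ℂ)) * v y := by
    rw [hsq, Matrix.smul_mulVec, hv1]
    funext y; simp; ring
  have h4 : ((lam : ℂ) * (lam : ℂ)) * v x = ((c:ℂ) * (lam:ℂ)) * v x := by
    have := congrFun (h2.symm.trans h3) x
    simpa using this
  have h5 : (lam : ℂ) * (lam : ℂ) = (c:ℂ) * (lam:ℂ) := mul_right_cancel₀ hx h4
  have h6 : lam * lam = c * lam := by exact_mod_cast h5
  rcases mul_eq_mul_right_iff.mp (by linarith [h6] : lam * lam = c * lam) with h | h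
  · right; exact h
  · left; exact h

lemma PhiRQ_sqrt : ((PhiRQ_psd.1.eigenvectorUnitary : Matrix (Fin 2 × Fin 2) (Fin 2 × Fin 2) ℂ) *
    diagonal (fun i => ((Real.sqrt (PhiRQ_psd.1.eigenvalues i) : ℝ) : ℂ)) *
    (star (PhiRQ_psd.1.eigenvectorUnitary : Matrix (Fin 2 × Fin 2) (Fin 2 × Fin 2) ℂ))) = PhiRQ := by
  have hAA : PhiRQ * PhiRQ = ((1:ℝ):ℂ) • PhiRQ := by
    rw [Complex.ofReal_one, one_smul, PhiRQ_eq, outer_mul_outer_self]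
  have h : (fun i => ((Real.sqrt (PhiRQ_psd.1.eigenvalues i) : ℝ) : ℂ))
      = RCLike.ofReal ∘ PhiRQ_psd.1.eigenvalues := by
    funext i
    rcases eig_quad PhiRQ_psd.1 1 hAA i with h | h <;> simp [h]
  have hs := PhiRQ_psd.1.spectral_theorem
  rw [Unitary.conjStarAlgAut_apply] at hs
  rw [h]
  exact hs.symm

lemma sandwich (σ : Matrix (Fin 2 × Fin 2) (Fin 2 × Fin 2) ℂ) :
    PhiRQ * σ * PhiRQ = (dotProduct (star psiv) (σ *ᵥ psiv)) • PhiRQ := by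
  ext i j
  simp only [PhiRQ_eq, Matrix.mul_apply, outer, Matrix.smul_apply, smul_eq_mul,
    dotProduct, Matrix.mulVec, Pi.star_apply, RCLike.star_def, Finset.sum_mul,
    Finset.mul_sum]
  rw [Finset.sum_comm]
  refine Finset.sum_congr rfl fun k _ => Finset.sum_congr rfl fun l _ => by ring

lemma trace_PhiRQ : PhiRQ.trace = 1 := by
  rw [PhiRQ_eq]
  unfold Matrix.trace outer
  rw [← psiv_norm]
  exact Finset.sum_congr rfl fun p _ => by unfold Matrix.diag; ring

lemma fid_main (σ : Matrix (Fin 2 × Fin 2) (Fin 2 × Fin 2) ℂ) (ε : ℝ)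
    (hεlt : ε < Real.sqrt 3 / 4) (hpd : pdist σ PhiRQ ≤ ε) :
    1 - ε ^ 2 ≤ (dotProduct (star psiv) (σ *ᵥ psiv)).re ∧ 0 ≤ ε ∧ ε < 1 / 2 := by
  have hε0 : 0 ≤ ε := le_trans (Real.sqrt_nonneg _) hpd
  have hs3 : Real.sqrt 3 < 2 := by
    rw [show (2:ℝ) = Real.sqrt 4 by rw [show (4:ℝ) = 2^2 by norm_num, Real.sqrt_sq (by norm_num)]]
    exact Real.sqrt_lt_sqrt (by norm_num) (by norm_num)
  have hεhalf : ε < 1 / 2 := by linarith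
  set c : ℂ := dotProduct (star psiv) (σ *ᵥ psiv) with hc
  set F : ℝ := fidelity σ PhiRQ with hF
  have hF2 : 1 - ε ^ 2 ≤ F ^ 2 := by
    rcases le_or_gt (1 - F ^ 2) 0 with h | h
    · nlinarith
    · have : Real.sqrt (1 - F ^ 2) ≤ ε := hpd
      nlinarith [Real.sq_sqrt h.le, Real.sqrt_nonneg (1 - F^2),
        mul_self_le_mul_self (Real.sqrt_nonneg (1 - F^2)) this]
  have hmat2 : ((PhiRQ_psd.1.eigenvectorUnitary : Matrix (Fin 2 × Fin 2) (Fin 2 × Fin 2) ℂ) *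
      diagonal (fun i => ((Real.sqrt (PhiRQ_psd.1.eigenvalues i) : ℝ) : ℂ)) *
      (star (PhiRQ_psd.1.eigenvectorUnitary : Matrix (Fin 2 × Fin 2) (Fin 2 × Fin 2) ℂ))) * σ *
      ((PhiRQ_psd.1.eigenvectorUnitary : Matrix (Fin 2 × Fin 2) (Fin 2 × Fin 2) ℂ) *
      diagonal (fun i => ((Real.sqrt (PhiRQ_psd.1.eigenvalues i) : ℝ) : ℂ)) *
      (star (PhiRQ_psd.1.eigenvectorUnitary : Matrix (Fin 2 × Fin 2) (Fin 2 × Fin 2) ℂ)))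
      = c • PhiRQ := by
    rw [PhiRQ_sqrt, sandwich]
  have hFdef : F = if h : (c • PhiRQ).IsHermitian then ∑ i, Real.sqrt (h.eigenvalues i) else 0 := by
    rw [hF]
    unfold fidelity
    rw [dif_pos PhiRQ_psd]
    congr 1 <;> rw [hmat2]
  have hclaim : F = 0 ∨ (0 < c.re ∧ F ^ 2 = c.re) := by
    by_cases hherm : (c • PhiRQ).IsHermitian
    · have hceq : (starRingEnd ℂ) c = c := by
        have h00 := congrFun (congrFun hherm.eq ((0:Fin 2),(0:Fin 2))) ((0:Fin 2),(0:Fin 2))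
        simp only [Matrix.conjTranspose_apply, Matrix.smul_apply, smul_eq_mul, star_mul',
          RCLike.star_def] at h00
        have hphi00 : PhiRQ ((0:Fin 2),(0:Fin 2)) ((0:Fin 2),(0:Fin 2)) = 1/2 := by
          rw [PhiRQ_eq]
          show psiv (0,0) * (starRingEnd ℂ) (psiv (0,0)) = 1/2
          rw [conj_psiv]
          simp only [psiv, if_pos rfl]
          exact s_mul_s
        rw [hphi00] at h00
        have : (starRingEnd ℂ) ((1:ℂ)/2) = 1/2 := by rw [map_div₀, _root_.map_one, map_ofNat]
        rw [this] at h00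
        have h2 : ((1:ℂ)/2) ≠ 0 := by norm_num
        field_simp at h00
        exact h00
      have hrre : c = ((c.re : ℝ) : ℂ) := (Complex.conj_eq_iff_re.mp hceq).symm ▸ rfl
      have hAA : (c • PhiRQ) * (c • PhiRQ) = ((c.re : ℝ) : ℂ) • (c • PhiRQ) := by
        rw [smul_mul_assoc, mul_smul_comm, PhiRQ_eq, outer_mul_outer_self, smul_smul, smul_smul,
          ← hrre]
      have heig := fun i => eig_quad hherm c.re hAA i
      have htrc : ∑ i, ((hherm.eigenvalues i : ℝ) : ℂ) = c := by
        rw [← trace_eq_sum_eig hherm, Matrix.trace_smul, trace_PhiRQ, smul_eq_mul, mul_one]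
      have hsum : ∑ i, hherm.eigenvalues i = c.re := by
        have : ((∑ i, hherm.eigenvalues i : ℝ) : ℂ) = ((c.re : ℝ) : ℂ) := by
          rw [Complex.ofReal_sum, htrc]; exact hrre
        exact_mod_cast this
      rcases le_or_gt c.re 0 with hr | hr
      · left
        rw [hFdef, dif_pos hherm]
        refine Finset.sum_eq_zero fun i _ => ?_
        rcases heig i with h | h
        · rw [h, Real.sqrt_zero]
        · exact Real.sqrt_eq_zero'.mpr (by rw [h]; exact hr)
      · right
        refine ⟨hr, ?_⟩
        have hs : ∀ i, Real.sqrt (hherm.eigenvalues i) = hherm.eigenvalues i / Real.sqrt c.re := by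
          intro i
          rcases heig i with h | h
          · rw [h, Real.sqrt_zero, zero_div]
          · rw [h, eq_div_iff (Real.sqrt_ne_zero'.mpr hr)]
            exact Real.mul_self_sqrt hr.le
        rw [hFdef, dif_pos hherm, Finset.sum_congr rfl (fun i _ => hs i), ← Finset.sum_div, hsum,
          div_pow, Real.sq_sqrt hr.le, pow_two, mul_div_assoc, div_self hr.ne', mul_one]
    · left; rw [hFdef, dif_neg hherm]
  rcases hclaim with h0 | ⟨hpos, heq⟩
  · exfalso
    rw [h0] at hF2
    nlinarith
  · exact ⟨heq ▸ hF2, hε0, hεhalf⟩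

noncomputable def w0 : (Fin 2 × Fin 2 × Fin 2) → ℂ :=
  fun p => (((if p = (0,0,0) then 1 else 0) - (if p = (1,0,1) then 1 else 0)
      - (if p = (1,1,0) then 1 else 0) : ℝ) : ℂ)
noncomputable def w1 : (Fin 2 × Fin 2 × Fin 2) → ℂ :=
  fun p => (((if p = (0,0,1) then 1 else 0) - (if p = (1,1,1) then (1/2:ℝ) else 0) : ℝ) : ℂ)
noncomputable def w2 : (Fin 2 × Fin 2 × Fin 2) → ℂ :=
  fun p => (((if p = (0,1,0) then 1 else 0) - (if p = (1,1,1) then (1/2:ℝ) else 0) : ℝ) : ℂ)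
noncomputable def w3 : (Fin 2 × Fin 2 × Fin 2) → ℂ :=
  fun p => (((if p = (0,1,1) then 1 else 0) : ℝ) : ℂ)
noncomputable def w4 : (Fin 2 × Fin 2 × Fin 2) → ℂ :=
  fun p => (((if p = (1,0,0) then 1 else 0) : ℝ) : ℂ)
noncomputable def w5 : (Fin 2 × Fin 2 × Fin 2) → ℂ :=
  fun p => (((if p = (1,0,1) then 1 else 0) - (if p = (1,1,0) then 1 else 0) : ℝ) : ℂ)

set_option maxHeartbeats 1000000 in
lemma c0_exp (ω : Matrix (Fin 2 × Fin 2 × Fin 2) (Fin 2 × Fin 2 × Fin 2) ℂ) :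
    dotProduct (star psiv) (trThird ω *ᵥ psiv) =
      (1/2 : ℂ) * (ω (0,0,0) (0,0,0) + ω (0,0,1) (0,0,1) + ω (0,0,0) (1,1,0) + ω (0,0,1) (1,1,1)
        + ω (1,1,0) (0,0,0) + ω (1,1,1) (0,0,1) + ω (1,1,0) (1,1,0) + ω (1,1,1) (1,1,1)) := by
  have hs := s_mul_s
  simp only [dotProduct, mulVec, trThird, Fintype.sum_prod_type, Fin.sum_univ_two,
    Pi.star_apply, RCLike.star_def, psiv, conj_s]
  norm_num
  ring_nf
  rw [show (((Real.sqrt 2 : ℝ) : ℂ)⁻¹)^2 = 1/2 by rw [sq]; exact hs]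
  ring

set_option maxHeartbeats 1000000 in
lemma c1_exp (ω : Matrix (Fin 2 × Fin 2 × Fin 2) (Fin 2 × Fin 2 × Fin 2) ℂ) :
    dotProduct (star psiv) (trSecond ω *ᵥ psiv) =
      (1/2 : ℂ) * (ω (0,0,0) (0,0,0) + ω (0,1,0) (0,1,0) + ω (0,0,0) (1,0,1) + ω (0,1,0) (1,1,1)
        + ω (1,0,1) (0,0,0) + ω (1,1,1) (0,1,0) + ω (1,0,1) (1,0,1) + ω (1,1,1) (1,1,1)) := by
  have hs := s_mul_s
  simp only [dotProduct, mulVec, trSecond, Fintype.sum_prod_type, Fin.sum_univ_two,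
    Pi.star_apply, RCLike.star_def, psiv, conj_s]
  norm_num
  ring_nf
  rw [show (((Real.sqrt 2 : ℝ) : ℂ)⁻¹)^2 = 1/2 by rw [sq]; exact hs]
  ring

set_option maxHeartbeats 1000000 in
lemma tr_exp (ω : Matrix (Fin 2 × Fin 2 × Fin 2) (Fin 2 × Fin 2 × Fin 2) ℂ) :
    ω.trace = ω (0,0,0) (0,0,0) + ω (0,0,1) (0,0,1) + ω (0,1,0) (0,1,0) + ω (0,1,1) (0,1,1)
      + ω (1,0,0) (1,0,0) + ω (1,0,1) (1,0,1) + ω (1,1,0) (1,1,0) + ω (1,1,1) (1,1,1) := by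
  simp only [Matrix.trace, Matrix.diag, Fintype.sum_prod_type, Fin.sum_univ_two]
  ring

set_option maxHeartbeats 1000000 in
lemma f0_exp (ω : Matrix (Fin 2 × Fin 2 × Fin 2) (Fin 2 × Fin 2 × Fin 2) ℂ) :
    dotProduct (star w0) (ω *ᵥ w0) =
      ω (0,0,0) (0,0,0) - ω (0,0,0) (1,0,1) - ω (0,0,0) (1,1,0)
      - ω (1,0,1) (0,0,0) + ω (1,0,1) (1,0,1) + ω (1,0,1) (1,1,0)
      - ω (1,1,0) (0,0,0) + ω (1,1,0) (1,0,1) + ω (1,1,0) (1,1,0) := by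
  simp only [dotProduct, mulVec, w0, Fintype.sum_prod_type, Fin.sum_univ_two,
    Pi.star_apply, RCLike.star_def, Complex.conj_ofReal]
  norm_num [Prod.ext_iff]
  ring

set_option maxHeartbeats 1000000 in
lemma f1_exp (ω : Matrix (Fin 2 × Fin 2 × Fin 2) (Fin 2 × Fin 2 × Fin 2) ℂ) :
    dotProduct (star w1) (ω *ᵥ w1) =
      ω (0,0,1) (0,0,1) - (1/2) * ω (0,0,1) (1,1,1) - (1/2) * ω (1,1,1) (0,0,1)
      + (1/4) * ω (1,1,1) (1,1,1) := by
  simp only [dotProduct, mulVec, w1, Fintype.sum_prod_type, Fin.sum_univ_two,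
    Pi.star_apply, RCLike.star_def, Complex.conj_ofReal]
  norm_num [Prod.ext_iff]
  ring

set_option maxHeartbeats 1000000 in
lemma f2_exp (ω : Matrix (Fin 2 × Fin 2 × Fin 2) (Fin 2 × Fin 2 × Fin 2) ℂ) :
    dotProduct (star w2) (ω *ᵥ w2) =
      ω (0,1,0) (0,1,0) - (1/2) * ω (0,1,0) (1,1,1) - (1/2) * ω (1,1,1) (0,1,0)
      + (1/4) * ω (1,1,1) (1,1,1) := by
  simp only [dotProduct, mulVec, w2, Fintype.sum_prod_type, Fin.sum_univ_two,
    Pi.star_apply, RCLike.star_def, Complex.conj_ofReal]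
  norm_num [Prod.ext_iff]
  ring

set_option maxHeartbeats 1000000 in
lemma f3_exp (ω : Matrix (Fin 2 × Fin 2 × Fin 2) (Fin 2 × Fin 2 × Fin 2) ℂ) :
    dotProduct (star w3) (ω *ᵥ w3) = ω (0,1,1) (0,1,1) := by
  simp only [dotProduct, mulVec, w3, Fintype.sum_prod_type, Fin.sum_univ_two,
    Pi.star_apply, RCLike.star_def, Complex.conj_ofReal]
  norm_num [Prod.ext_iff]

set_option maxHeartbeats 1000000 in
lemma f4_exp (ω : Matrix (Fin 2 × Fin 2 × Fin 2) (Fin 2 × Fin 2 × Fin 2) ℂ) :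
    dotProduct (star w4) (ω *ᵥ w4) = ω (1,0,0) (1,0,0) := by
  simp only [dotProduct, mulVec, w4, Fintype.sum_prod_type, Fin.sum_univ_two,
    Pi.star_apply, RCLike.star_def, Complex.conj_ofReal]
  norm_num [Prod.ext_iff]

set_option maxHeartbeats 1000000 in
lemma f5_exp (ω : Matrix (Fin 2 × Fin 2 × Fin 2) (Fin 2 × Fin 2 × Fin 2) ℂ) :
    dotProduct (star w5) (ω *ᵥ w5) =
      ω (1,0,1) (1,0,1) - ω (1,0,1) (1,1,0) - ω (1,1,0) (1,0,1) + ω (1,1,0) (1,1,0) := by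
  simp only [dotProduct, mulVec, w5, Fintype.sum_prod_type, Fin.sum_univ_two,
    Pi.star_apply, RCLike.star_def, Complex.conj_ofReal]
  norm_num [Prod.ext_iff]
  ring

lemma keyIneq (ω : Matrix (Fin 2 × Fin 2 × Fin 2) (Fin 2 × Fin 2 × Fin 2) ℂ)
    (hω : ω.PosSemidef) (htr : ω.trace = 1) :
    (dotProduct (star psiv) (trThird ω *ᵥ psiv)).re
      + (dotProduct (star psiv) (trSecond ω *ᵥ psiv)).re ≤ 3/2 := by
  have hid : dotProduct (star psiv) (trThird ω *ᵥ psiv)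
      + dotProduct (star psiv) (trSecond ω *ᵥ psiv)
      + ((1/2 : ℂ) * dotProduct (star w0) (ω *ᵥ w0)
        + dotProduct (star w1) (ω *ᵥ w1) + dotProduct (star w2) (ω *ᵥ w2)
        + (3/2 : ℂ) * dotProduct (star w3) (ω *ᵥ w3)
        + (3/2 : ℂ) * dotProduct (star w4) (ω *ᵥ w4)
        + (1/2 : ℂ) * dotProduct (star w5) (ω *ᵥ w5)) = (3/2 : ℂ) * ω.trace := by
    rw [c0_exp, c1_exp, f0_exp, f1_exp, f2_exp, f3_exp, f4_exp, f5_exp, tr_exp]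
    ring
  rw [htr, mul_one] at hid
  have hre := congrArg Complex.re hid
  simp only [Complex.add_re, Complex.mul_re] at hre
  have h0 := hω.re_dotProduct_nonneg w0
  have h1 := hω.re_dotProduct_nonneg w1
  have h2 := hω.re_dotProduct_nonneg w2
  have h3 := hω.re_dotProduct_nonneg w3
  have h4 := hω.re_dotProduct_nonneg w4
  have h5 := hω.re_dotProduct_nonneg w5
  simp only [RCLike.re_to_complex] at h0 h1 h2 h3 h4 h5
  norm_num at hre
  linarith

noncomputable def cmat3 {dM dM' e : ℕ} (A : Matrix (Fin e) (Fin dM') ℂ) :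
    Matrix (Fin 2 × Fin dM × Fin e) (Fin 2 × Fin dM × Fin dM') ℂ :=
  fun p y => (if p.1 = y.1 then 1 else 0) * (if p.2.1 = y.2.1 then 1 else 0) * A p.2.2 y.2.2

noncomputable def cmat2 {dM dM' e : ℕ} (A : Matrix (Fin e) (Fin dM) ℂ) :
    Matrix (Fin 2 × Fin e × Fin dM') (Fin 2 × Fin dM × Fin dM') ℂ :=
  fun p y => (if p.1 = y.1 then 1 else 0) * A p.2.1 y.2.1 * (if p.2.2 = y.2.2 then 1 else 0)

lemma cmat3_entry {dM dM' e : ℕ} (A : Matrix (Fin e) (Fin dM') ℂ)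
    (ρ : Matrix (Fin 2 × Fin dM × Fin dM') (Fin 2 × Fin dM × Fin dM') ℂ)
    (p q : Fin 2 × Fin dM × Fin e) :
    (cmat3 (dM := dM) A * ρ * (cmat3 (dM := dM) A)ᴴ : Matrix (Fin 2 × Fin dM × Fin e) (Fin 2 × Fin dM × Fin e) ℂ) p q
      = ∑ m', ∑ n', A p.2.2 m' * (starRingEnd ℂ) (A q.2.2 n') *
      ρ (p.1, p.2.1, m') (q.1, q.2.1, n') := by
  simp only [Matrix.mul_apply, Matrix.conjTranspose_apply, cmat3, Fintype.sum_prod_type,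
    ite_mul, mul_ite, zero_mul, mul_zero, one_mul, Finset.sum_ite_irrel, Finset.sum_const_zero,
    Finset.sum_ite_eq, Finset.mem_univ, if_true, star_mul', apply_ite (star : ℂ → ℂ), star_one,
    star_zero, RCLike.star_def]
  simp only [Finset.sum_mul]
  rw [Finset.sum_comm]
  exact Finset.sum_congr rfl fun m' _ => Finset.sum_congr rfl fun n' _ => by ring

lemma cmat2_entry {dM dM' e : ℕ} (A : Matrix (Fin e) (Fin dM) ℂ)
    (ρ : Matrix (Fin 2 × Fin dM × Fin dM') (Fin 2 × Fin dM × Fin dM') ℂ)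
    (p q : Fin 2 × Fin e × Fin dM') :
    (cmat2 (dM' := dM') A * ρ * (cmat2 (dM' := dM') A)ᴴ : Matrix (Fin 2 × Fin e × Fin dM') (Fin 2 × Fin e × Fin dM') ℂ) p q
      = ∑ m, ∑ n, A p.2.1 m * (starRingEnd ℂ) (A q.2.1 n) *
      ρ (p.1, m, p.2.2) (q.1, n, q.2.2) := by
  simp only [Matrix.mul_apply, Matrix.conjTranspose_apply, cmat2, Fintype.sum_prod_type,
    ite_mul, mul_ite, zero_mul, mul_zero, one_mul, mul_one, Finset.sum_ite_irrel,
    Finset.sum_const_zero, Finset.sum_ite_eq, Finset.mem_univ, if_true, star_mul',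
    apply_ite (star : ℂ → ℂ), star_one, star_zero, RCLike.star_def]
  simp only [Finset.sum_mul]
  rw [Finset.sum_comm]
  exact Finset.sum_congr rfl fun m _ => Finset.sum_congr rfl fun n _ => by ring

lemma psd_sum {n ι : Type*} [Fintype n] [Fintype ι] [DecidableEq n] (f : ι → Matrix n n ℂ)
    (h : ∀ i, (f i).PosSemidef) : (∑ i, f i).PosSemidef := by
  refine Matrix.PosSemidef.of_dotProduct_mulVec_nonneg ?_ ?_
  · unfold Matrix.IsHermitian
    rw [Matrix.conjTranspose_sum]
    exact Finset.sum_congr rfl fun i _ => (h i).1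
  · intro x
    have hmv : (∑ i, f i) *ᵥ x = ∑ i, (f i) *ᵥ x := by
      funext j
      simp only [Matrix.mulVec, dotProduct, Matrix.sum_apply, Finset.sum_apply,
        Finset.sum_mul]
      exact Finset.sum_comm
    have hdp : dotProduct (star x) (∑ i, (f i) *ᵥ x) = ∑ i, dotProduct (star x) ((f i) *ᵥ x) := by
      simp only [dotProduct, Finset.sum_apply, Finset.mul_sum]
      exact Finset.sum_comm
    rw [hmv, hdp]
    exact Finset.sum_nonneg fun i _ => (h i).dotProduct_mulVec_nonneg x

/-- the inner (M') Kraus contraction -/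
noncomputable def innerS {dM dM' k' : ℕ} (K' : Fin k' → Matrix (Fin 2) (Fin dM') ℂ)
    (ρ : Matrix (Fin 2 × Fin dM × Fin dM') (Fin 2 × Fin dM × Fin dM') ℂ)
    (a a' c c' : Fin 2) (m n : Fin dM) : ℂ :=
  ∑ j, ∑ m', ∑ n', K' j c m' * (starRingEnd ℂ) (K' j c' n') * ρ (a, m, m') (a', n, n')

/-- the joint output state on R ⊗ Q ⊗ Q' -/
noncomputable def omegaSt {dM dM' k k' : ℕ} (K : Fin k → Matrix (Fin 2) (Fin dM) ℂ)
    (K' : Fin k' → Matrix (Fin 2) (Fin dM') ℂ)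
    (ρ : Matrix (Fin 2 × Fin dM × Fin dM') (Fin 2 × Fin dM × Fin dM') ℂ) :
    Matrix (Fin 2 × Fin 2 × Fin 2) (Fin 2 × Fin 2 × Fin 2) ℂ :=
  ∑ i, cmat2 (dM' := 2) (K i) * (∑ j, cmat3 (dM := dM) (K' j) * ρ * (cmat3 (dM := dM) (K' j))ᴴ) *
    (cmat2 (dM' := 2) (K i))ᴴ

lemma omegaSt_apply {dM dM' k k' : ℕ} (K : Fin k → Matrix (Fin 2) (Fin dM) ℂ)
    (K' : Fin k' → Matrix (Fin 2) (Fin dM') ℂ)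
    (ρ : Matrix (Fin 2 × Fin dM × Fin dM') (Fin 2 × Fin dM × Fin dM') ℂ)
    (p q : Fin 2 × Fin 2 × Fin 2) :
    omegaSt K K' ρ p q = ∑ i, ∑ m, ∑ n, K i p.2.1 m * (starRingEnd ℂ) (K i q.2.1 n) *
      innerS K' ρ p.1 q.1 p.2.2 q.2.2 m n := by
  unfold omegaSt
  rw [Matrix.sum_apply]
  refine Finset.sum_congr rfl fun i _ => ?_
  rw [cmat2_entry (K i) _ p q]
  refine Finset.sum_congr rfl fun m _ => Finset.sum_congr rfl fun n _ => ?_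
  congr 1
  rw [Matrix.sum_apply]
  unfold innerS
  refine Finset.sum_congr rfl fun j _ => ?_
  rw [cmat3_entry (K' j) ρ _ _]

lemma kraus_contract {d k' : ℕ} (K' : Fin k' → Matrix (Fin 2) (Fin d) ℂ)
    (hK' : ∑ j, (K' j)ᴴ * K' j = 1) (g : Fin d → Fin d → ℂ) :
    ∑ c : Fin 2, ∑ j : Fin k', ∑ m', ∑ n',
      K' j c m' * (starRingEnd ℂ) (K' j c n') * g m' n' = ∑ m', g m' m' := by
  have hdel : ∀ m' n' : Fin d, (∑ j, ∑ c : Fin 2, K' j c m' * (starRingEnd ℂ) (K' j c n'))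
      = if n' = m' then 1 else 0 := by
    intro m' n'
    have h := congrFun (congrFun (congrArg (fun M => M) hK') n') m'
    simp only [Matrix.sum_apply, Matrix.mul_apply, Matrix.conjTranspose_apply,
      RCLike.star_def, Matrix.one_apply] at h
    rw [← h]
    exact Finset.sum_congr rfl fun j _ => Finset.sum_congr rfl fun c _ => by ring
  calc ∑ c : Fin 2, ∑ j, ∑ m', ∑ n', K' j c m' * (starRingEnd ℂ) (K' j c n') * g m' n'
      = ∑ j, ∑ c : Fin 2, ∑ m', ∑ n', K' j c m' * (starRingEnd ℂ) (K' j c n') * g m' n' :=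
        Finset.sum_comm
    _ = ∑ j, ∑ m', ∑ c : Fin 2, ∑ n', K' j c m' * (starRingEnd ℂ) (K' j c n') * g m' n' :=
        Finset.sum_congr rfl fun j _ => Finset.sum_comm
    _ = ∑ m', ∑ j, ∑ c : Fin 2, ∑ n', K' j c m' * (starRingEnd ℂ) (K' j c n') * g m' n' :=
        Finset.sum_comm
    _ = ∑ m', ∑ j, ∑ n', ∑ c : Fin 2, K' j c m' * (starRingEnd ℂ) (K' j c n') * g m' n' :=
        Finset.sum_congr rfl fun m' _ => Finset.sum_congr rfl fun j _ => Finset.sum_comm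
    _ = ∑ m', ∑ n', ∑ j, ∑ c : Fin 2, K' j c m' * (starRingEnd ℂ) (K' j c n') * g m' n' :=
        Finset.sum_congr rfl fun m' _ => Finset.sum_comm
    _ = ∑ m', ∑ n', (∑ j, ∑ c : Fin 2, K' j c m' * (starRingEnd ℂ) (K' j c n')) * g m' n' := by
        refine Finset.sum_congr rfl fun m' _ => Finset.sum_congr rfl fun n' _ => ?_
        rw [Finset.sum_mul]
        exact Finset.sum_congr rfl fun j _ => by rw [Finset.sum_mul]
    _ = ∑ m', ∑ n', (if n' = m' then 1 else 0) * g m' n' := by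
        exact Finset.sum_congr rfl fun m' _ => Finset.sum_congr rfl fun n' _ => by rw [hdel]
    _ = ∑ m', g m' m' := by
        refine Finset.sum_congr rfl fun m' _ => ?_
        simp [ite_mul]

lemma trThird_omega {dM dM' k k' : ℕ} (K : Fin k → Matrix (Fin 2) (Fin dM) ℂ)
    (K' : Fin k' → Matrix (Fin 2) (Fin dM') ℂ) (hK' : ∑ j, (K' j)ᴴ * K' j = 1)
    (ρ : Matrix (Fin 2 × Fin dM × Fin dM') (Fin 2 × Fin dM × Fin dM') ℂ) :
    trThird (omegaSt K K' ρ) = applyKraus K (trThird ρ) := by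
  funext p q
  obtain ⟨a, b⟩ := p
  obtain ⟨a', b'⟩ := q
  show ∑ c : Fin 2, omegaSt K K' ρ (a, b, c) (a', b', c) = _
  rw [Finset.sum_congr rfl fun c _ => omegaSt_apply K K' ρ (a, b, c) (a', b', c)]
  calc ∑ c : Fin 2, ∑ i, ∑ m, ∑ n, K i b m * (starRingEnd ℂ) (K i b' n) *
        innerS K' ρ a a' c c m n
      = ∑ i, ∑ c : Fin 2, ∑ m, ∑ n, K i b m * (starRingEnd ℂ) (K i b' n) *
          innerS K' ρ a a' c c m n := Finset.sum_comm
    _ = ∑ i, ∑ m, ∑ c : Fin 2, ∑ n, K i b m * (starRingEnd ℂ) (K i b' n) *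
          innerS K' ρ a a' c c m n := Finset.sum_congr rfl fun i _ => Finset.sum_comm
    _ = ∑ i, ∑ m, ∑ n, ∑ c : Fin 2, K i b m * (starRingEnd ℂ) (K i b' n) *
          innerS K' ρ a a' c c m n :=
        Finset.sum_congr rfl fun i _ => Finset.sum_congr rfl fun m _ => Finset.sum_comm
    _ = ∑ i, ∑ m, ∑ n, K i b m * (starRingEnd ℂ) (K i b' n) *
          (∑ c : Fin 2, innerS K' ρ a a' c c m n) := by
        refine Finset.sum_congr rfl fun i _ => Finset.sum_congr rfl fun m _ =>
          Finset.sum_congr rfl fun n _ => ?_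
        rw [Finset.mul_sum]
    _ = ∑ i, ∑ m, ∑ n, K i b m * (starRingEnd ℂ) (K i b' n) *
          (∑ m', ρ (a, m, m') (a', n, m')) := by
        refine Finset.sum_congr rfl fun i _ => Finset.sum_congr rfl fun m _ =>
          Finset.sum_congr rfl fun n _ => ?_
        rw [show (∑ c : Fin 2, innerS K' ρ a a' c c m n) = ∑ m', ρ (a, m, m') (a', n, m') from
          kraus_contract K' hK' (fun m' n' => ρ (a, m, m') (a', n, n'))]
    _ = ∑ i, ∑ m, ∑ n, K i b m * trThird ρ (a, m) (a', n) * (starRingEnd ℂ) (K i b' n) := by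
        refine Finset.sum_congr rfl fun i _ => Finset.sum_congr rfl fun m _ =>
          Finset.sum_congr rfl fun n _ => ?_
        unfold trThird
        ring
    _ = applyKraus K (trThird ρ) (a, b) (a', b') := rfl

lemma trSecond_omega {dM dM' k k' : ℕ} (K : Fin k → Matrix (Fin 2) (Fin dM) ℂ)
    (hK : ∑ i, (K i)ᴴ * K i = 1) (K' : Fin k' → Matrix (Fin 2) (Fin dM') ℂ)
    (ρ : Matrix (Fin 2 × Fin dM × Fin dM') (Fin 2 × Fin dM × Fin dM') ℂ) :
    trSecond (omegaSt K K' ρ) = applyKraus K' (trSecond ρ) := by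
  funext p q
  obtain ⟨a, b⟩ := p
  obtain ⟨a', b'⟩ := q
  show ∑ e : Fin 2, omegaSt K K' ρ (a, e, b) (a', e, b') = _
  rw [Finset.sum_congr rfl fun e _ => omegaSt_apply K K' ρ (a, e, b) (a', e, b')]
  calc ∑ e : Fin 2, ∑ i, ∑ m, ∑ n, K i e m * (starRingEnd ℂ) (K i e n) *
        innerS K' ρ a a' b b' m n
      = ∑ m, innerS K' ρ a a' b b' m m :=
        kraus_contract K hK (fun m n => innerS K' ρ a a' b b' m n)
    _ = ∑ m, ∑ j, ∑ m', ∑ n', K' j b m' * (starRingEnd ℂ) (K' j b' n') * ρ (a, m, m') (a', m, n') :=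
        rfl
    _ = ∑ j, ∑ m, ∑ m', ∑ n', K' j b m' * (starRingEnd ℂ) (K' j b' n') * ρ (a, m, m') (a', m, n') :=
        Finset.sum_comm
    _ = ∑ j, ∑ m', ∑ m, ∑ n', K' j b m' * (starRingEnd ℂ) (K' j b' n') * ρ (a, m, m') (a', m, n') :=
        Finset.sum_congr rfl fun j _ => Finset.sum_comm
    _ = ∑ j, ∑ m', ∑ n', ∑ m, K' j b m' * (starRingEnd ℂ) (K' j b' n') * ρ (a, m, m') (a', m, n') :=
        Finset.sum_congr rfl fun j _ => Finset.sum_congr rfl fun m' _ => Finset.sum_comm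
    _ = ∑ j, ∑ m', ∑ n', K' j b m' * trSecond ρ (a, m') (a', n') * (starRingEnd ℂ) (K' j b' n') := by
        refine Finset.sum_congr rfl fun j _ => Finset.sum_congr rfl fun m' _ =>
          Finset.sum_congr rfl fun n' _ => ?_
        unfold trSecond
        rw [Finset.mul_sum, Finset.sum_mul]
        exact Finset.sum_congr rfl fun m _ => by ring
    _ = applyKraus K' (trSecond ρ) (a, b) (a', b') := rfl

lemma trace_omega {dM dM' k k' : ℕ} (K : Fin k → Matrix (Fin 2) (Fin dM) ℂ)
    (hK : ∑ i, (K i)ᴴ * K i = 1) (K' : Fin k' → Matrix (Fin 2) (Fin dM') ℂ)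
    (hK' : ∑ j, (K' j)ᴴ * K' j = 1)
    (ρ : Matrix (Fin 2 × Fin dM × Fin dM') (Fin 2 × Fin dM × Fin dM') ℂ) :
    (omegaSt K K' ρ).trace = ρ.trace := by
  have h1 : ∀ a : Fin 2, ∑ b : Fin 2, ∑ c : Fin 2, omegaSt K K' ρ (a, b, c) (a, b, c)
      = ∑ m, ∑ m', ρ (a, m, m') (a, m, m') := by
    intro a
    rw [Finset.sum_congr rfl fun b _ => Finset.sum_congr rfl fun c _ =>
      omegaSt_apply K K' ρ (a, b, c) (a, b, c)]
    calc ∑ b : Fin 2, ∑ c : Fin 2, ∑ i, ∑ m, ∑ n, K i b m * (starRingEnd ℂ) (K i b n) *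
          innerS K' ρ a a c c m n
        = ∑ b : Fin 2, ∑ i, ∑ m, ∑ n, K i b m * (starRingEnd ℂ) (K i b n) *
            (∑ c : Fin 2, innerS K' ρ a a c c m n) := by
          refine Finset.sum_congr rfl fun b _ => ?_
          calc ∑ c : Fin 2, ∑ i, ∑ m, ∑ n, K i b m * (starRingEnd ℂ) (K i b n) *
                innerS K' ρ a a c c m n
              = ∑ i, ∑ c : Fin 2, ∑ m, ∑ n, K i b m * (starRingEnd ℂ) (K i b n) *
                  innerS K' ρ a a c c m n := Finset.sum_comm
            _ = ∑ i, ∑ m, ∑ c : Fin 2, ∑ n, K i b m * (starRingEnd ℂ) (K i b n) *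
                  innerS K' ρ a a c c m n := Finset.sum_congr rfl fun i _ => Finset.sum_comm
            _ = ∑ i, ∑ m, ∑ n, ∑ c : Fin 2, K i b m * (starRingEnd ℂ) (K i b n) *
                  innerS K' ρ a a c c m n :=
                Finset.sum_congr rfl fun i _ => Finset.sum_congr rfl fun m _ => Finset.sum_comm
            _ = ∑ i, ∑ m, ∑ n, K i b m * (starRingEnd ℂ) (K i b n) *
                  (∑ c : Fin 2, innerS K' ρ a a c c m n) := by
                refine Finset.sum_congr rfl fun i _ => Finset.sum_congr rfl fun m _ =>
                  Finset.sum_congr rfl fun n _ => ?_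
                rw [Finset.mul_sum]
      _ = ∑ b : Fin 2, ∑ i, ∑ m, ∑ n, K i b m * (starRingEnd ℂ) (K i b n) *
            (∑ m', ρ (a, m, m') (a, n, m')) := by
          refine Finset.sum_congr rfl fun b _ => Finset.sum_congr rfl fun i _ =>
            Finset.sum_congr rfl fun m _ => Finset.sum_congr rfl fun n _ => ?_
          rw [show (∑ c : Fin 2, innerS K' ρ a a c c m n) = ∑ m', ρ (a, m, m') (a, n, m') from
            kraus_contract K' hK' (fun m' n' => ρ (a, m, m') (a, n, n'))]
      _ = ∑ m, ∑ m', ρ (a, m, m') (a, m, m') :=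
          kraus_contract K hK (fun m n => ∑ m', ρ (a, m, m') (a, n, m'))
  calc (omegaSt K K' ρ).trace
      = ∑ a : Fin 2, ∑ b : Fin 2, ∑ c : Fin 2, omegaSt K K' ρ (a, b, c) (a, b, c) := by
        simp [Matrix.trace, Matrix.diag, Fintype.sum_prod_type]
    _ = ∑ a : Fin 2, ∑ m, ∑ m', ρ (a, m, m') (a, m, m') := Finset.sum_congr rfl fun a _ => h1 a
    _ = ρ.trace := by simp [Matrix.trace, Matrix.diag, Fintype.sum_prod_type]

/-- if `ε < √3/4` then `S̃₀^ε ∩ S̃₁^ε = ∅`. -/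
theorem recovSet0_inter_recovSet1_empty (dM dM' : ℕ) (ε : ℝ) (hε : ε < Real.sqrt 3 / 4) :
    (recovSet0 (dM := dM) (dM' := dM') ε) ∩ recovSet1 ε = ∅ := by
  rw [Set.eq_empty_iff_forall_notMem]
  rintro ρ ⟨⟨⟨hpsd, htr⟩, k, K, hK, hpd0⟩, ⟨-, k', K', hK', hpd1⟩⟩
  obtain ⟨ha0, hε0, hεhalf⟩ := fid_main _ ε hε hpd0
  obtain ⟨ha1, -, -⟩ := fid_main _ ε hε hpd1
  have hσ0 : trThird (omegaSt K K' ρ) = applyKraus K (trThird ρ) := trThird_omega K K' hK' ρ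
  have hσ1 : trSecond (omegaSt K K' ρ) = applyKraus K' (trSecond ρ) := trSecond_omega K hK K' ρ
  have hωtr : (omegaSt K K' ρ).trace = 1 := by rw [trace_omega K hK K' hK' ρ, htr]
  have hωpsd : (omegaSt K K' ρ).PosSemidef :=
    psd_sum _ fun i => (psd_sum _ fun j => hpsd.mul_mul_conjTranspose_same
      (cmat3 (K' j))).mul_mul_conjTranspose_same (cmat2 (K i))
  have hkey := keyIneq (omegaSt K K' ρ) hωpsd hωtr
  rw [hσ0, hσ1] at hkey
  nlinarith
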